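/- Let (Ω, μ) be a measure space, let r > 3 be a real number, let ε > 0, and let F, G : Ω → [0, ∞] be measurable. Then ∫⁻ F² · G dμ ≤ (the image of ε in [0, ∞]) · ∫⁻ F^(r−1) · G dμ + (the image of ((r−3)/(r−1)) · (2/(ε·(r−1)))^(2/(r−3)) in [0, ∞]) · ∫⁻ G dμ. -/

import Mathlib

open MeasureTheory
open scoped ENNReal

/-- Real pointwise Young inequality: `t² ≤ ε t^(r-1) + C`. -/
lemma real_young_pointwise (r ε : ℝ) (hr : 3 < r) (hε : 0 < ε) {t : ℝ} (ht : 0 ≤ t) :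
    t ^ (2 : ℝ) ≤ ε * t ^ (r - 1) +
      ((r - 3) / (r - 1)) * (2 / (ε * (r - 1))) ^ (2 / (r - 3)) := by
  set p : ℝ := (r - 1) / 2 with hp
  set q : ℝ := (r - 1) / (r - 3) with hq
  have hr1 : 0 < r - 1 := by linarith
  have hr3 : 0 < r - 3 := by linarith
  have hppos : 0 < p := by positivity
  have hqpos : 0 < q := by positivity
  have hpq : p.HolderConjugate q := by
    rw [Real.holderConjugate_iff]
    constructor
    · rw [hp]; rw [lt_div_iff₀ (by norm_num : (0:ℝ) < 2)]; linarith
    · rw [hp, hq]; field_simp; ring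
  have hc : 0 < ε * p := by positivity
  have key := Real.young_inequality_of_nonneg
    (a := (ε * p) ^ (1 / p) * t ^ (2 : ℝ)) (b := ((ε * p) ^ (1 / p))⁻¹)
    (by positivity) (by positivity) hpq
  have hab : (ε * p) ^ (1 / p) * t ^ (2 : ℝ) * ((ε * p) ^ (1 / p))⁻¹ = t ^ (2 : ℝ) := by
    have h : (ε * p) ^ (1 / p) ≠ 0 := by positivity
    rw [mul_comm ((ε * p) ^ (1 / p)) (t ^ (2:ℝ)), mul_assoc, mul_inv_cancel₀ h, mul_one]
  have hcp : ((ε * p) ^ (1 / p)) ^ p = ε * p := by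
    rw [← Real.rpow_mul hc.le, one_div, inv_mul_cancel₀ hppos.ne', Real.rpow_one]
  have hap : ((ε * p) ^ (1 / p) * t ^ (2 : ℝ)) ^ p / p = ε * t ^ (r - 1) := by
    rw [Real.mul_rpow (by positivity) (by positivity), hcp, ← Real.rpow_mul ht]
    have h2p : 2 * p = r - 1 := by rw [hp]; ring
    rw [h2p]
    field_simp
  have hbq : (((ε * p) ^ (1 / p))⁻¹) ^ q / q =
      ((r - 3) / (r - 1)) * (2 / (ε * (r - 1))) ^ (2 / (r - 3)) := by
    rw [← Real.rpow_neg_one ((ε * p) ^ (1/p)), ← Real.rpow_mul hc.le,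
      ← Real.rpow_mul hc.le]
    have hqp : 1 / p * (-1) * q = -(2 / (r - 3)) := by
      rw [hp, hq]; field_simp
    rw [hqp, Real.rpow_neg hc.le, ← Real.inv_rpow hc.le]
    have hinv : (ε * p)⁻¹ = 2 / (ε * (r - 1)) := by
      rw [hp]; field_simp
    have hqinv : 1 / q = (r - 3) / (r - 1) := by
      rw [hq]; field_simp
    rw [hinv, div_eq_mul_inv, ← one_div, hqinv, mul_comm]
  rw [hab, hap, hbq] at key
  exact key

/-- The Hölder–Young estimate (2a29)/(6.30) used for local monotonicity of `μA + B + βC`. -/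
theorem holder_young_absorption
    {Ω : Type*} [MeasurableSpace Ω] (μ : Measure Ω)
    (r ε : ℝ) (hr : 3 < r) (hε : 0 < ε)
    (F G : Ω → ℝ≥0∞) (hF : Measurable F) (hG : Measurable G) :
    ∫⁻ ω, F ω ^ (2 : ℝ) * G ω ∂μ ≤
      ENNReal.ofReal ε * ∫⁻ ω, F ω ^ (r - 1) * G ω ∂μ +
        ENNReal.ofReal (((r - 3) / (r - 1)) * (2 / (ε * (r - 1))) ^ (2 / (r - 3))) *
          ∫⁻ ω, G ω ∂μ := by
  set C : ℝ := ((r - 3) / (r - 1)) * (2 / (ε * (r - 1))) ^ (2 / (r - 3)) with hC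
  have hCnn : 0 ≤ C := by
    have hr1 : (0:ℝ) < r - 1 := by linarith
    have hr3 : (0:ℝ) < r - 3 := by linarith
    positivity
  have hpt : ∀ x : ℝ≥0∞, x ^ (2 : ℝ) ≤
      ENNReal.ofReal ε * x ^ (r - 1) + ENNReal.ofReal C := by
    intro x
    rcases eq_or_ne x ⊤ with hx | hx
    · subst hx
      rw [ENNReal.top_rpow_of_pos (by linarith : (0:ℝ) < r - 1),
        ENNReal.mul_top (by simpa using hε : ENNReal.ofReal ε ≠ 0)]
      simp
    · obtain ⟨t, ht, rfl⟩ : ∃ t : ℝ, 0 ≤ t ∧ ENNReal.ofReal t = x :=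
        ⟨x.toReal, ENNReal.toReal_nonneg, ENNReal.ofReal_toReal hx⟩
      rw [ENNReal.ofReal_rpow_of_nonneg ht (by norm_num : (0:ℝ) ≤ 2),
        ENNReal.ofReal_rpow_of_nonneg ht (by linarith : (0:ℝ) ≤ r - 1),
        ← ENNReal.ofReal_mul hε.le, ← ENNReal.ofReal_add (by positivity) hCnn]
      exact ENNReal.ofReal_le_ofReal (real_young_pointwise r ε hr hε ht)
  calc ∫⁻ ω, F ω ^ (2 : ℝ) * G ω ∂μ
      ≤ ∫⁻ ω, (ENNReal.ofReal ε * F ω ^ (r - 1) + ENNReal.ofReal C) * G ω ∂μ := by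
        refine lintegral_mono fun ω => ?_
        exact mul_le_mul_left (hpt (F ω)) _
    _ = ∫⁻ ω, ENNReal.ofReal ε * (F ω ^ (r - 1) * G ω) + ENNReal.ofReal C * G ω ∂μ := by
        congr 1; funext ω; ring
    _ = ENNReal.ofReal ε * ∫⁻ ω, F ω ^ (r - 1) * G ω ∂μ +
        ENNReal.ofReal C * ∫⁻ ω, G ω ∂μ := by
        rw [lintegral_add_left (f := fun ω => ENNReal.ofReal ε * (F ω ^ (r - 1) * G ω))
            (measurable_const.mul ((hF.pow_const _).mul hG)),
          lintegral_const_mul _ (f := fun ω => F ω ^ (r - 1) * G ω) ((hF.pow_const _).mul hG),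
          lintegral_const_mul _ hG]
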